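/- Let r ≥ 1 and let L be an M_r(ℂ)-valued function, holomorphic on a punctured neighborhood of z₀ ∈ ℂ, with Laurent expansion L(z) = β·αᵀ·(z−z₀)⁻¹ + L₁ + L₂(z−z₀) + O((z−z₀)²), where α, β ∈ ℂʳ satisfy αᵀβ = 1 and αᵀL₁ = κ·αᵀ for some κ ∈ ℂ. Let f be a row-vector-valued function, holomorphic on the punctured neighborhood, with expansion f(z) = λ·αᵀ·(z−z₀)⁻¹ + f₀ + O(z−z₀) for some λ ∈ ℂ and constant row vector f₀. Then the row-vector function g := −(f′ + f·L) has at most a simple pole at z₀, and its residue is proportional to αᵀ; explicitly, g(z) = λ′·αᵀ·(z−z₀)⁻¹ + O(1) with λ′ = −(λκ + f₀β). (This is the invariance of the space F_s of framed local sections under the adjoint action fᵀ ↦ −(∂_z fᵀ + fᵀL), equation (action) of the paper.) -/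

import Mathlib

/-- Invariance of the space `F_s` of framed local sections under the adjoint action
`fᵀ ↦ −(∂_z fᵀ + fᵀL)` (equation (action) of the paper): if `L` has a simple pole with
rank-one residue `β·αᵀ`, `αᵀβ = 1`, `αᵀL₁ = κ·αᵀ`, and `f` has a simple pole with residue
`λ·αᵀ`, then `g = −(f′ + f·L)` has at most a simple pole with residue `λ′·αᵀ`,
`λ′ = −(λκ + f₀β)`. -/
theorem stmt_1 (r : ℕ) (hr : 1 ≤ r) (z₀ : ℂ) (V : Set ℂ) (hVopen : IsOpen V) (hz₀ : z₀ ∈ V)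
    (L RL : ℂ → Matrix (Fin r) (Fin r) ℂ)
    (α β : Fin r → ℂ) (L₁ L₂ : Matrix (Fin r) (Fin r) ℂ) (κ : ℂ)
    (hL : ∀ i j, DifferentiableOn ℂ (fun z => L z i j) (V \ {z₀}))
    (hRL : ∀ i j, DifferentiableOn ℂ (fun z => RL z i j) V)
    (hLexp : ∀ z ∈ V \ {z₀},
      L z = (z - z₀)⁻¹ • Matrix.of (fun i j => β i * α j) + L₁ + (z - z₀) • L₂
            + ((z - z₀) ^ 2) • RL z)
    (hαβ : (∑ i, α i * β i) = 1)
    (hκ : ∀ j, (∑ i, α i * L₁ i j) = κ * α j)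
    (f ρ : ℂ → Fin r → ℂ) (lam : ℂ) (f₀ : Fin r → ℂ)
    (hf : ∀ j, DifferentiableOn ℂ (fun z => f z j) (V \ {z₀}))
    (hρ : ∀ j, DifferentiableOn ℂ (fun z => ρ z j) V)
    (hfexp : ∀ z ∈ V \ {z₀}, f z = (z - z₀)⁻¹ • (lam • α) + f₀ + (z - z₀) • ρ z) :
    ∃ W : Set ℂ, IsOpen W ∧ z₀ ∈ W ∧ W ⊆ V ∧
      ∃ h : ℂ → Fin r → ℂ,
        (∀ j, DifferentiableOn ℂ (fun z => h z j) W) ∧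
        ∀ z ∈ W \ {z₀},
          (fun j => -(deriv (fun w => f w j) z + ∑ i, f z i * L z i j))
            = (z - z₀)⁻¹ • ((-(lam * κ + ∑ i, f₀ i * β i)) • α) + h z := by

  refine ⟨V, hVopen, hz₀, le_refl V, ?_⟩
  have hU : IsOpen (V \ {z₀}) := hVopen.sdiff isClosed_singleton
  -- the holomorphic remainder
  set h : ℂ → Fin r → ℂ := fun z j =>
    -(ρ z j + (z - z₀) * deriv (fun w => ρ w j) z
      + lam * (∑ i, α i * L₂ i j) + lam * ((z - z₀) * (∑ i, α i * RL z i j))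
      + (∑ i, f₀ i * L₁ i j) + (z - z₀) * (∑ i, f₀ i * L₂ i j)
      + (z - z₀) ^ 2 * (∑ i, f₀ i * RL z i j)
      + (∑ i, ρ z i * β i) * α j + (z - z₀) * (∑ i, ρ z i * L₁ i j)
      + (z - z₀) ^ 2 * (∑ i, ρ z i * L₂ i j)
      + (z - z₀) ^ 3 * (∑ i, ρ z i * RL z i j)) with hh
  have hρd : ∀ j, DifferentiableOn ℂ (fun z => deriv (fun w => ρ w j) z) V := fun j =>
    (((hρ j).analyticOnNhd hVopen).deriv).differentiableOn
  refine ⟨h, ?_, ?_⟩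
  · intro j
    apply DifferentiableOn.neg
    apply DifferentiableOn.add
    apply DifferentiableOn.add
    apply DifferentiableOn.add
    apply DifferentiableOn.add
    apply DifferentiableOn.add
    apply DifferentiableOn.add
    apply DifferentiableOn.add
    apply DifferentiableOn.add
    apply DifferentiableOn.add
    apply DifferentiableOn.add
    · exact hρ j
    · exact (differentiableOn_id.sub (differentiableOn_const _)).mul (hρd j)
    · exact differentiableOn_const _
    · exact (differentiableOn_const _).mul
        ((differentiableOn_id.sub (differentiableOn_const _)).mul
          (DifferentiableOn.fun_sum fun i _ => (hRL i j).const_mul _))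
    · exact differentiableOn_const _
    · exact (differentiableOn_id.sub (differentiableOn_const _)).mul (differentiableOn_const _)
    · exact ((differentiableOn_id.sub (differentiableOn_const _)).pow 2).mul
        (DifferentiableOn.fun_sum fun i _ => (hRL i j).const_mul _)
    · exact (DifferentiableOn.fun_sum fun i _ => (hρ i).mul_const _).mul_const _
    · exact (differentiableOn_id.sub (differentiableOn_const _)).mul
        (DifferentiableOn.fun_sum fun i _ => (hρ i).mul_const _)
    · exact ((differentiableOn_id.sub (differentiableOn_const _)).pow 2).mul
        (DifferentiableOn.fun_sum fun i _ => (hρ i).mul_const _)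
    · exact ((differentiableOn_id.sub (differentiableOn_const _)).pow 3).mul
        (DifferentiableOn.fun_sum fun i _ => (hρ i).fun_mul (hRL i j))
  · intro z hz
    obtain ⟨hzV, hzne'⟩ := hz
    have hzne : z ≠ z₀ := hzne'
    have ht : z - z₀ ≠ 0 := sub_ne_zero.2 hzne
    funext j
    -- derivative of f at z, component j
    have hρdiff : ∀ i, DifferentiableAt ℂ (fun w => ρ w i) z :=
      fun i => ((hρ i).differentiableAt (hVopen.mem_nhds hzV))
    have hD1 : HasDerivAt (fun w : ℂ => (w - z₀)⁻¹ * (lam * α j))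
        (-1 / (z - z₀) ^ 2 * (lam * α j)) z := by
      have := (((hasDerivAt_id z).sub_const z₀).inv ht).mul_const (lam * α j)
      simpa using this
    have hD2 : HasDerivAt (fun w : ℂ => (w - z₀) * ρ w j)
        (1 * ρ z j + (z - z₀) * deriv (fun w => ρ w j) z) z :=
      ((hasDerivAt_id z).sub_const z₀).mul ((hρdiff j).hasDerivAt)
    have hDF : HasDerivAt (fun w : ℂ => (w - z₀)⁻¹ * (lam * α j) + f₀ j + (w - z₀) * ρ w j)
        (-1 / (z - z₀) ^ 2 * (lam * α j) + (1 * ρ z j + (z - z₀) * deriv (fun w => ρ w j) z)) z := by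
      simpa using (hD1.add_const (f₀ j)).fun_add hD2
    have hev : (fun w => f w j) =ᶠ[nhds z]
        (fun w : ℂ => (w - z₀)⁻¹ * (lam * α j) + f₀ j + (w - z₀) * ρ w j) := by
      filter_upwards [hU.mem_nhds ⟨hzV, hzne'⟩] with w hw
      rw [hfexp w hw]
      simp only [Pi.add_apply, Pi.smul_apply, smul_eq_mul]
    have hderiv : deriv (fun w => f w j) z
        = -1 / (z - z₀) ^ 2 * (lam * α j) + (1 * ρ z j + (z - z₀) * deriv (fun w => ρ w j) z) := by
      rw [hev.deriv_eq]
      exact hDF.deriv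
    -- the sum
    have hsum : ∑ i, f z i * L z i j =
        (z - z₀)⁻¹ * (z - z₀)⁻¹ * lam * α j * (∑ i, α i * β i)
        + (z - z₀)⁻¹ * lam * (∑ i, α i * L₁ i j)
        + lam * (∑ i, α i * L₂ i j)
        + (z - z₀) * lam * (∑ i, α i * RL z i j)
        + (z - z₀)⁻¹ * α j * (∑ i, f₀ i * β i)
        + (∑ i, f₀ i * L₁ i j)
        + (z - z₀) * (∑ i, f₀ i * L₂ i j)
        + (z - z₀) ^ 2 * (∑ i, f₀ i * RL z i j)
        + (z - z₀) * (z - z₀)⁻¹ * α j * (∑ i, ρ z i * β i)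
        + (z - z₀) * (∑ i, ρ z i * L₁ i j)
        + (z - z₀) ^ 2 * (∑ i, ρ z i * L₂ i j)
        + (z - z₀) ^ 3 * (∑ i, ρ z i * RL z i j) := by
      simp only [Finset.mul_sum]
      rw [← Finset.sum_add_distrib, ← Finset.sum_add_distrib, ← Finset.sum_add_distrib,
        ← Finset.sum_add_distrib, ← Finset.sum_add_distrib, ← Finset.sum_add_distrib,
        ← Finset.sum_add_distrib, ← Finset.sum_add_distrib, ← Finset.sum_add_distrib,
        ← Finset.sum_add_distrib, ← Finset.sum_add_distrib]
      apply Finset.sum_congr rfl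
      intro i _
      rw [hfexp z ⟨hzV, hzne'⟩, hLexp z ⟨hzV, hzne'⟩]
      simp only [Pi.add_apply, Pi.smul_apply, Matrix.add_apply, Matrix.smul_apply,
        Matrix.of_apply, smul_eq_mul]
      field_simp
      ring
    rw [hderiv, hsum, hαβ, hκ j]
    simp only [hh, Pi.add_apply, Pi.smul_apply, smul_eq_mul]
    have hinv : (z - z₀) * (z - z₀)⁻¹ = 1 := mul_inv_cancel₀ ht
    have e1 : -1 / (z - z₀) ^ 2 * (lam * α j) = -((z - z₀)⁻¹ * (z - z₀)⁻¹ * lam * α j) := by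
      rw [pow_two, neg_div, div_eq_mul_inv, one_mul, mul_inv]
      ring
    rw [e1, hinv]
    ring
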